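/- Let T be a tree with distinct edge weights and let (u,v) be the maximum-weight edge of T. Then in the single-linkage dendrogram of T (built by merging in increasing weight order), the root node corresponds to edge (u,v), and its two children's leaf sets are exactly the vertex sets of the two components of T − (u,v). -/

import Mathlib

open SimpleGraph

section Aux

open Relation

lemma myEqvGen_bot {α : Type*} {r : α → α → Prop} (h : ∀ a b, ¬ r a b) {x y : α}
    (hxy : EqvGen r x y) : x = y := by
  induction hxy with
  | rel a b hab => exact absurd hab (h a b)
  | refl => rfl
  | symm _ _ _ ih => exact ih.symm
  | trans _ _ _ _ _ ih1 ih2 => exact ih1.trans ih2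

lemma myEqvGen_congr {α : Type*} {r s : α → α → Prop} (h : ∀ a b, r a b ↔ s a b) {x y : α} :
    EqvGen r x y ↔ EqvGen s x y := by
  have : r = s := funext₂ fun a b => propext (h a b)
  rw [this]

lemma myEqvGen_iff_reflTransGen {α : Type*} {r : α → α → Prop} (hs : Symmetric r) {x y : α} :
    EqvGen r x y ↔ ReflTransGen r x y := by
  constructor
  · intro h
    induction h with
    | rel a b hab => exact ReflTransGen.single hab
    | refl => exact ReflTransGen.refl
    | symm a b _ ih => exact (haveI : Std.Symm r := ⟨fun _ _ h => hs h⟩; Std.Symm.symm _ _ ih)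
    | trans _ _ _ _ _ ih1 ih2 => exact ih1.trans ih2
  · intro h
    induction h with
    | refl => exact EqvGen.refl _
    | tail _ hab ih => exact ih.trans _ _ _ (EqvGen.rel _ _ hab)

lemma myEqvGen_insert {α : Type*} (r : α → α → Prop) (a b : α) (x y : α) :
    EqvGen (fun p q => r p q ∨ (p = a ∧ q = b) ∨ (p = b ∧ q = a)) x y ↔
    EqvGen r x y ∨ (EqvGen r x a ∧ EqvGen r b y) ∨ (EqvGen r x b ∧ EqvGen r a y) := by
  constructor
  · intro h
    induction h with
    | rel p q hpq =>
      rcases hpq with h | ⟨rfl, rfl⟩ | ⟨rfl, rfl⟩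
      · exact Or.inl (EqvGen.rel _ _ h)
      · exact Or.inr (Or.inl ⟨EqvGen.refl _, EqvGen.refl _⟩)
      · exact Or.inr (Or.inr ⟨EqvGen.refl _, EqvGen.refl _⟩)
    | refl => exact Or.inl (EqvGen.refl _)
    | symm p q _ ih =>
      rcases ih with h | ⟨h1, h2⟩ | ⟨h1, h2⟩
      · exact Or.inl (h.symm _ _)
      · exact Or.inr (Or.inr ⟨h2.symm _ _, h1.symm _ _⟩)
      · exact Or.inr (Or.inl ⟨h2.symm _ _, h1.symm _ _⟩)
    | trans p q z _ _ ih1 ih2 =>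
      rcases ih1 with h | ⟨h1, h2⟩ | ⟨h1, h2⟩ <;>
        rcases ih2 with g | ⟨g1, g2⟩ | ⟨g1, g2⟩
      · exact Or.inl (h.trans _ _ _ g)
      · exact Or.inr (Or.inl ⟨h.trans _ _ _ g1, g2⟩)
      · exact Or.inr (Or.inr ⟨h.trans _ _ _ g1, g2⟩)
      · exact Or.inr (Or.inl ⟨h1, h2.trans _ _ _ g⟩)
      · exact Or.inr (Or.inl ⟨h1, g2⟩)
      · exact Or.inl (h1.trans _ _ _ g2)
      · exact Or.inr (Or.inr ⟨h1, h2.trans _ _ _ g⟩)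
      · exact Or.inl (h1.trans _ _ _ g2)
      · exact Or.inr (Or.inr ⟨h1, g2⟩)
  · rintro (h | ⟨h1, h2⟩ | ⟨h1, h2⟩)
    · exact Relation.EqvGen.mono (fun p q hpq => Or.inl hpq) _ _ h
    · have hab : EqvGen (fun p q => r p q ∨ (p = a ∧ q = b) ∨ (p = b ∧ q = a)) a b :=
        EqvGen.rel _ _ (Or.inr (Or.inl ⟨rfl, rfl⟩))
      exact ((Relation.EqvGen.mono (fun p q hpq => Or.inl hpq) _ _ h1).trans _ _ _ hab).trans _ _ _
        (Relation.EqvGen.mono (fun p q hpq => Or.inl hpq) _ _ h2)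
    · have hab : EqvGen (fun p q => r p q ∨ (p = a ∧ q = b) ∨ (p = b ∧ q = a)) b a :=
        EqvGen.rel _ _ (Or.inr (Or.inr ⟨rfl, rfl⟩))
      exact ((Relation.EqvGen.mono (fun p q hpq => Or.inl hpq) _ _ h1).trans _ _ _ hab).trans _ _ _
        (Relation.EqvGen.mono (fun p q hpq => Or.inl hpq) _ _ h2)

/-- The symmetric relation induced by a list of (unordered) edges given as pairs. -/
def pairRel {V : Type*} (l : List (V × V)) (x y : V) : Prop :=
  ∃ p ∈ l, p = (x, y) ∨ p = (y, x)

lemma pairRel_nil {V : Type*} (x y : V) : ¬ pairRel ([] : List (V × V)) x y := by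
  rintro ⟨p, hp, _⟩
  simp at hp

lemma pairRel_concat {V : Type*} (l : List (V × V)) (a b x y : V) :
    pairRel (l ++ [(a, b)]) x y ↔ pairRel l x y ∨ (x = a ∧ y = b) ∨ (x = b ∧ y = a) := by
  constructor
  · rintro ⟨p, hp, hor⟩
    rcases List.mem_append.mp hp with h1 | h1
    · exact Or.inl ⟨p, h1, hor⟩
    · have hp' : p = (a, b) := by simpa using h1
      subst hp'
      rcases hor with h | h
      · injection h with h1 h2
        exact Or.inr (Or.inl ⟨h1.symm, h2.symm⟩)
      · injection h with h1 h2
        exact Or.inr (Or.inr ⟨h2.symm, h1.symm⟩)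
  · rintro (⟨p, hp, hor⟩ | ⟨rfl, rfl⟩ | ⟨rfl, rfl⟩)
    · exact ⟨p, List.mem_append_left _ hp, hor⟩
    · exact ⟨(x, y), List.mem_append_right _ (by simp), Or.inl rfl⟩
    · exact ⟨(y, x), List.mem_append_right _ (by simp), Or.inr rfl⟩

open Classical in
lemma clus_invariant {V : Type*} (edges : List (V × V)) (clus : ℕ → V → Set V)
    (h0 : ∀ x : V, clus 0 x = {x})
    (hstep : ∀ i : Fin edges.length, ∀ x : V,
      clus (i + 1) x =
        if x ∈ clus i (edges.get i).1 ∪ clus i (edges.get i).2 then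
          clus i (edges.get i).1 ∪ clus i (edges.get i).2
        else clus i x) :
    ∀ i, i ≤ edges.length → ∀ x,
      clus i x = {y | EqvGen (pairRel (edges.take i)) x y} := by
  intro i
  induction i with
  | zero =>
    intro _ x
    ext y
    simp only [h0, Set.mem_singleton_iff, List.take_zero, Set.mem_setOf_eq]
    constructor
    · rintro rfl; exact EqvGen.refl _
    · intro h; exact (myEqvGen_bot pairRel_nil h).symm
  | succ i ih =>
    intro hi x
    have hi' : i < edges.length := hi
    set e := edges.get ⟨i, hi'⟩ with he
    have htake : edges.take (i + 1) = edges.take i ++ [e] := by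
      rw [List.take_succ, List.getElem?_eq_getElem hi']
      rfl
    set r := pairRel (edges.take i) with hr
    have hEG : ∀ x y : V, EqvGen (pairRel (edges.take (i + 1))) x y ↔
        EqvGen r x y ∨ (EqvGen r x e.1 ∧ EqvGen r e.2 y) ∨
          (EqvGen r x e.2 ∧ EqvGen r e.1 y) := by
      intro x y
      rw [htake, myEqvGen_congr (fun a b => pairRel_concat (edges.take i) e.1 e.2 a b)]
      exact myEqvGen_insert r e.1 e.2 x y
    have key := hstep ⟨i, hi'⟩ x
    simp only [ih (Nat.le_of_succ_le hi)] at key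
    rw [key]
    by_cases hc : EqvGen r e.1 x ∨ EqvGen r e.2 x
    · rw [if_pos (by simpa only [Set.mem_union, Set.mem_setOf_eq] using hc)]
      ext y
      simp only [Set.mem_union, Set.mem_setOf_eq, hEG x y]
      rcases hc with h1 | h1
      · constructor
        · rintro (h | h)
          · exact Or.inl ((h1.symm _ _).trans _ _ _ h)
          · exact Or.inr (Or.inl ⟨h1.symm _ _, h⟩)
        · rintro (h | ⟨_, h2⟩ | ⟨_, h2⟩)
          · exact Or.inl (h1.trans _ _ _ h)
          · exact Or.inr h2
          · exact Or.inl h2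
      · constructor
        · rintro (h | h)
          · exact Or.inr (Or.inr ⟨h1.symm _ _, h⟩)
          · exact Or.inl ((h1.symm _ _).trans _ _ _ h)
        · rintro (h | ⟨_, h2⟩ | ⟨_, h2⟩)
          · exact Or.inr (h1.trans _ _ _ h)
          · exact Or.inr h2
          · exact Or.inl h2
    · rw [if_neg (by simpa only [Set.mem_union, Set.mem_setOf_eq] using hc)]
      ext y
      simp only [Set.mem_setOf_eq, hEG x y]
      constructor
      · intro h; exact Or.inl h
      · rintro (h | ⟨h1, _⟩ | ⟨h1, _⟩)
        · exact h
        · exact absurd (Or.inl (h1.symm _ _)) hc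
        · exact absurd (Or.inr (h1.symm _ _)) hc

end Aux

open Classical in
/-- Let `T` be a tree with distinct edge weights and let `(u, v)` be its maximum-weight edge
(the last edge in the sorted enumeration `edges`). In the single-linkage dendrogram of `T`
(built by merging in increasing weight order), the root node corresponds to the edge `(u, v)`:
the final merge is of the edge `(u, v)`, the root cluster is all of `V`, and the leaf sets of
its two children are exactly the vertex sets of the two components of `T − (u, v)`. -/
theorem dendrogram_root_is_max_edge {V : Type*} [Fintype V]
    (T : SimpleGraph V) (hT : T.IsTree) (w : Sym2 V → ℝ)
    (hw : ∀ e ∈ T.edgeSet, ∀ e' ∈ T.edgeSet, w e = w e' → e = e')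
    (edges : List (V × V)) (hne : edges ≠ [])
    (hmem : ∀ x y : V, T.Adj x y ↔ ∃ p ∈ edges, p = (x, y) ∨ p = (y, x))
    (hnodup : (edges.map fun p => s(p.1, p.2)).Nodup)
    (hsorted : edges.Pairwise fun p q => w s(p.1, p.2) ≤ w s(q.1, q.2))
    (clus : ℕ → V → Set V)
    (h0 : ∀ x : V, clus 0 x = {x})
    (hstep : ∀ i : Fin edges.length, ∀ x : V,
      clus (i + 1) x =
        if x ∈ clus i (edges.get i).1 ∪ clus i (edges.get i).2 then
          clus i (edges.get i).1 ∪ clus i (edges.get i).2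
        else clus i x)
    (u v : V) (hlast : edges.getLast hne = (u, v)) :
    (∀ p ∈ edges, w s(p.1, p.2) ≤ w s(u, v)) ∧
    clus edges.length u = Set.univ ∧
    clus (edges.length - 1) u = {x | (T.deleteEdges {s(u, v)}).Reachable u x} ∧
    clus (edges.length - 1) v = {x | (T.deleteEdges {s(u, v)}).Reachable v x} := by
  have inv := clus_invariant edges clus h0 hstep
  have hsplit : edges = edges.dropLast ++ [(u, v)] := by
    conv_lhs => rw [← List.dropLast_append_getLast hne, hlast]
  -- Part 1
  have part1 : ∀ p ∈ edges, w s(p.1, p.2) ≤ w s(u, v) := by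
    intro p hp
    have hs2 := hsorted
    rw [hsplit] at hs2
    rcases List.mem_append.mp (hsplit ▸ hp) with h1 | h1
    · have := (List.pairwise_append.mp hs2).2.2 p h1 (u, v) (by simp)
      exact this
    · have hp' : p = (u, v) := by simpa using h1
      subst hp'
      exact le_refl _
  -- Part 2
  have part2 : clus edges.length u = Set.univ := by
    rw [inv edges.length le_rfl u, List.take_length]
    ext y
    simp only [Set.mem_setOf_eq, Set.mem_univ, iff_true]
    have hco : ∀ a b : V, pairRel edges a b ↔ T.Adj a b := fun a b => (hmem a b).symm
    rw [myEqvGen_congr hco, myEqvGen_iff_reflTransGen (r := T.Adj) (fun _ _ h => h.symm),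
      ← SimpleGraph.reachable_iff_reflTransGen]
    exact hT.isConnected.preconnected u y
  -- Parts 3 & 4
  have hdl : edges.take (edges.length - 1) = edges.dropLast :=
    (List.dropLast_eq_take (l := edges)).symm
  have hnotmem : s(u, v) ∉ edges.dropLast.map (fun p => s(p.1, p.2)) := by
    have h := hnodup
    rw [hsplit, List.map_append] at h
    intro hm
    exact (List.disjoint_of_nodup_append h) hm (by simp)
  have hrel' : ∀ a b : V, pairRel (edges.take (edges.length - 1)) a b ↔
      (T.deleteEdges {s(u, v)}).Adj a b := by
    intro a b
    rw [hdl]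
    constructor
    · rintro ⟨p, hp, hor⟩
      have hadj : T.Adj a b := (hmem a b).mpr
        ⟨p, by rw [hsplit]; exact List.mem_append_left _ hp, hor⟩
      rw [SimpleGraph.deleteEdges_adj]
      refine ⟨hadj, ?_⟩
      simp only [Set.mem_singleton_iff]
      intro heq
      have hps : s(p.1, p.2) = s(u, v) := by
        rcases hor with rfl | rfl
        · exact heq
        · rw [← heq]; exact Sym2.eq_swap
      exact hnotmem (hps ▸ List.mem_map_of_mem hp)
    · intro hadj
      rw [SimpleGraph.deleteEdges_adj] at hadj
      obtain ⟨hT', hne'⟩ := hadj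
      obtain ⟨p, hp, hor⟩ := (hmem a b).mp hT'
      rw [hsplit] at hp
      rcases List.mem_append.mp hp with h1 | h1
      · exact ⟨p, h1, hor⟩
      · exfalso
        have hp' : p = (u, v) := by simpa using h1
        subst hp'
        apply hne'
        simp only [Set.mem_singleton_iff]
        rcases hor with h | h
        · injection h with h1 h2
          rw [← h1, ← h2]
        · injection h with h1 h2
          rw [← h1, ← h2]
          exact Sym2.eq_swap
  have part34 : ∀ z : V, clus (edges.length - 1) z =
      {x | (T.deleteEdges {s(u, v)}).Reachable z x} := by
    intro z
    rw [inv (edges.length - 1) (Nat.sub_le _ _) z]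
    ext y
    simp only [Set.mem_setOf_eq]
    rw [myEqvGen_congr hrel', myEqvGen_iff_reflTransGen (r := (T.deleteEdges {s(u, v)}).Adj) (fun _ _ h => h.symm),
      ← SimpleGraph.reachable_iff_reflTransGen]
  exact ⟨part1, part2, part34 u, part34 v⟩
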